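/- Let q be a twice differentiable nonvanishing function with q'' = 2q³ + tq, r = −q'/q, u = (q')² − tq² − q⁴, and u_r = −(r')²/2 + r⁴/2 − tr² − r. Then u_r = 2u + q'/q − t²/2. -/
import Mathlib

/-- Identity (4.15): for a nonvanishing Painlevé II solution `q` with
`r = -q'/q`, `u = (q')² - tq² - q⁴`, and
`u_r = -(r')²/2 + r⁴/2 - tr² - r`, one has `u_r = 2u + q'/q - t²/2`. -/
theorem stmt_17 (q q' q'' : ℝ → ℝ)
    (hq : ∀ t, HasDerivAt q (q' t) t)
    (hq' : ∀ t, HasDerivAt q' (q'' t) t)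
    (hPII : ∀ t, q'' t = 2 * q t ^ 3 + t * q t)
    (hne : ∀ t, q t ≠ 0) :
    ∀ t, -(deriv (fun s => -(q' s / q s)) t) ^ 2 / 2
        + (-(q' t / q t)) ^ 4 / 2 - t * (-(q' t / q t)) ^ 2 - (-(q' t / q t))
      = 2 * (q' t ^ 2 - t * q t ^ 2 - q t ^ 4) + q' t / q t - t ^ 2 / 2 := by
  intro t
  have hd : HasDerivAt (fun s => -(q' s / q s))
      (-((q'' t * q t - q' t * q' t) / q t ^ 2)) t :=
    (((hq' t).div (hq t) (hne t))).neg
  rw [hd.deriv, hPII t]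
  have h := hne t
  field_simp
  ring
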